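/- Let θ > 0 and C > 0, and let T₀, T₁ be real numbers with T₁ ≥ T₀ and T₀ > max(0, (2/θ)·log(2C/θ)). Let G : ℝ → ℝ be continuously differentiable on [T₀, T₁], with G(T₁) = 0 and |G′(t)| ≤ C·(|G(t)|^{3/4} + 1)·e^{−θt} for all t ∈ [T₀, T₁]. Then |G(t)| ≤ (2C/θ)·e^{−θt} for all t ∈ [T₀, T₁]. -/

import Mathlib

open Set

private lemma endpoint_le {f : ℝ → ℝ} {a b : ℝ} (hab : a < b)
    (hf : ContinuousOn f (Set.Icc a b)) (h : ∀ s ∈ Set.Ioc a b, f s ≤ 0) : f a ≤ 0 := by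
  have hne : (nhdsWithin a (Set.Ioc a b)).NeBot := by
    rw [← mem_closure_iff_nhdsWithin_neBot, closure_Ioc hab.ne]
    exact ⟨le_refl a, hab.le⟩
  have ht : Filter.Tendsto f (nhdsWithin a (Set.Ioc a b)) (nhds (f a)) :=
    (hf a ⟨le_refl a, hab.le⟩).mono Set.Ioc_subset_Icc_self
  exact le_of_tendsto ht (Filter.eventually_of_mem self_mem_nhdsWithin h)

/-- Bootstrap estimate for the modified energy: if `G` is `C¹` on `[T₀,T₁]`, vanishes at `T₁`,
and satisfies `|G′(t)| ≤ C·(|G(t)|^{3/4} + 1)·e^{−θt}`, with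
`T₀ > max(0, (2/θ)·log(2C/θ))`, then `|G(t)| ≤ (2C/θ)·e^{−θt}` on `[T₀,T₁]`. -/
theorem modified_energy_bootstrap (θ C T₀ T₁ : ℝ) (hθ : 0 < θ) (hC : 0 < C)
    (hT : T₀ ≤ T₁) (hT₀ : max 0 ((2 / θ) * Real.log (2 * C / θ)) < T₀)
    (G G' : ℝ → ℝ)
    (hderiv : ∀ t ∈ Set.Icc T₀ T₁, HasDerivAt G (G' t) t)
    (hcont : ContinuousOn G' (Set.Icc T₀ T₁))
    (hend : G T₁ = 0)
    (hbound : ∀ t ∈ Set.Icc T₀ T₁,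
      |G' t| ≤ C * (|G t| ^ ((3 : ℝ) / 4) + 1) * Real.exp (-θ * t)) :
    ∀ t ∈ Set.Icc T₀ T₁, |G t| ≤ (2 * C / θ) * Real.exp (-θ * t) := by
  set B : ℝ → ℝ := fun t => (2 * C / θ) * Real.exp (-θ * t) with hBdef
  have hT₀pos : 0 < T₀ := lt_of_le_of_lt (le_max_left _ _) hT₀
  have hCθ : 0 < 2 * C / θ := by positivity
  -- B < 1 on [T₀, T₁]
  have hB1 : ∀ s ∈ Set.Icc T₀ T₁, B s < 1 := by
    intro s hs
    have h1 : Real.log (2 * C / θ) < θ * T₀ / 2 := by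
      have h := lt_of_le_of_lt (le_max_right 0 ((2 / θ) * Real.log (2 * C / θ))) hT₀
      rw [div_mul_eq_mul_div, div_lt_iff₀ hθ] at h
      nlinarith
    have h2 : 2 * C / θ < Real.exp (θ * s) := by
      calc 2 * C / θ = Real.exp (Real.log (2 * C / θ)) := (Real.exp_log hCθ).symm
        _ < Real.exp (θ * s) := by
            apply Real.exp_lt_exp.mpr
            have : θ * T₀ / 2 ≤ θ * s := by nlinarith [hs.1]
            linarith
    rw [hBdef]
    have he : 0 < Real.exp (-θ * s) := Real.exp_pos _
    calc (2 * C / θ) * Real.exp (-θ * s) < Real.exp (θ * s) * Real.exp (-θ * s) := by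
          exact mul_lt_mul_of_pos_right h2 he
      _ = 1 := by rw [← Real.exp_add]; ring_nf; exact Real.exp_zero
  -- continuity of G
  have hGcont : ContinuousOn G (Set.Icc T₀ T₁) :=
    fun t ht => (hderiv t ht).continuousAt.continuousWithinAt
  have hBcont : Continuous B := by fun_prop
  set δ : ℝ := (2 * C / θ) * Real.exp (-θ * T₁) with hδdef
  have hδpos : 0 < δ := by positivity
  -- key integral estimate
  have key : ∀ t ∈ Set.Icc T₀ T₁, (∀ s ∈ Set.Icc t T₁, |G s| ≤ 1) → |G t| ≤ B t - δ := by
    intro t ht hsmall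
    have htT : t ≤ T₁ := ht.2
    have hsub : Set.Icc t T₁ ⊆ Set.Icc T₀ T₁ := Set.Icc_subset_Icc ht.1 le_rfl
    have huIcc : Set.uIcc t T₁ = Set.Icc t T₁ := Set.uIcc_of_le htT
    have hint : IntervalIntegrable G' MeasureTheory.volume t T₁ := by
      apply ContinuousOn.intervalIntegrable
      rw [huIcc]; exact hcont.mono hsub
    have hFTC : ∫ s in t..T₁, G' s = G T₁ - G t := by
      apply intervalIntegral.integral_eq_sub_of_hasDerivAt
      · intro x hx
        exact hderiv x (hsub (huIcc ▸ hx))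
      · exact hint
    have habs : |G t| ≤ ∫ s in t..T₁, |G' s| := by
      have := intervalIntegral.abs_integral_le_integral_abs (f := G') (μ := MeasureTheory.volume) htT
      rw [hFTC, hend] at this
      simpa [abs_sub_comm] using this
    have hintabs : IntervalIntegrable (fun s => |G' s|) MeasureTheory.volume t T₁ := by
      apply ContinuousOn.intervalIntegrable
      rw [huIcc]; exact (hcont.mono hsub).abs
    have hint2 : IntervalIntegrable (fun s => 2 * C * Real.exp (-θ * s))
        MeasureTheory.volume t T₁ := by
      apply ContinuousOn.intervalIntegrable
      fun_prop
    have hmono : (∫ s in t..T₁, |G' s|) ≤ ∫ s in t..T₁, 2 * C * Real.exp (-θ * s) := by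
      apply intervalIntegral.integral_mono_on htT hintabs hint2
      intro s hs
      have hsmem := hsub hs
      have h34 : |G s| ^ ((3:ℝ)/4) ≤ 1 :=
        Real.rpow_le_one (abs_nonneg _) (hsmall s hs) (by norm_num)
      calc |G' s| ≤ C * (|G s| ^ ((3:ℝ)/4) + 1) * Real.exp (-θ * s) := hbound s hsmem
        _ ≤ C * (1 + 1) * Real.exp (-θ * s) := by
            apply mul_le_mul_of_nonneg_right _ (Real.exp_pos _).le
            apply mul_le_mul_of_nonneg_left _ hC.le
            linarith
        _ = 2 * C * Real.exp (-θ * s) := by ring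
    have hcomp : (∫ s in t..T₁, 2 * C * Real.exp (-θ * s)) = B t - δ := by
      have hF : ∀ x ∈ Set.uIcc t T₁,
          HasDerivAt (fun s => -(2 * C / θ) * Real.exp (-θ * s)) (2 * C * Real.exp (-θ * x)) x := by
        intro x _
        have h1 : HasDerivAt (fun s : ℝ => -θ * s) (-θ) x := by
          simpa using (hasDerivAt_id x).const_mul (-θ)
        have h2 := (h1.exp).const_mul (-(2 * C / θ))
        refine h2.congr_deriv ?_
        linear_combination (2 * C * Real.exp (-θ * x)) * inv_mul_cancel₀ hθ.ne'
      have := intervalIntegral.integral_eq_sub_of_hasDerivAt hF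
        (by apply ContinuousOn.intervalIntegrable; fun_prop)
      rw [this, hBdef, hδdef]
      ring
    linarith
  -- the bootstrap set
  set S : Set ℝ := {t | t ∈ Set.Icc T₀ T₁ ∧ ∀ s ∈ Set.Icc t T₁, |G s| ≤ B s} with hSdef
  have hT₁S : T₁ ∈ S := by
    refine ⟨⟨hT, le_rfl⟩, ?_⟩
    intro s hs
    have : s = T₁ := le_antisymm hs.2 hs.1
    rw [this, hend]
    simp [hBdef]
    positivity
  have hSne : S.Nonempty := ⟨T₁, hT₁S⟩
  have hSbdd : BddBelow S := ⟨T₀, fun x hx => hx.1.1⟩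
  set m : ℝ := sInf S with hmdef
  have hmT₀ : T₀ ≤ m := le_csInf hSne (fun x hx => hx.1.1)
  have hmT₁ : m ≤ T₁ := csInf_le hSbdd hT₁S
  have hP : ∀ s, m < s → s ≤ T₁ → |G s| ≤ B s := by
    intro s hms hsT
    obtain ⟨t, htS, hts⟩ := (csInf_lt_iff hSbdd hSne).mp hms
    exact htS.2 s ⟨hts.le, hsT⟩
  have hGm : |G m| ≤ B m := by
    rcases eq_or_lt_of_le hmT₁ with h | h
    · rw [h, hend]; simp [hBdef]; positivity
    · have := endpoint_le (f := fun s => |G s| - B s) h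
        (((hGcont.mono (Set.Icc_subset_Icc hmT₀ le_rfl)).abs).sub (hBcont.continuousOn))
        (fun s hs => show |G s| - B s ≤ 0 by linarith [hP s hs.1 hs.2])
      have h2 : |G m| - B m ≤ 0 := this
      linarith
  have hmS : m ∈ S := by
    refine ⟨⟨hmT₀, hmT₁⟩, ?_⟩
    intro s hs
    rcases eq_or_lt_of_le hs.1 with h | h
    · rw [← h]; exact hGm
    · exact hP s h hs.2
  -- show m = T₀
  have hmeq : m = T₀ := by
    by_contra hne
    have hT₀m : T₀ < m := lt_of_le_of_ne hmT₀ (Ne.symm hne)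
    have hkey : |G m| ≤ B m - δ := by
      apply key m ⟨hmT₀, hmT₁⟩
      intro s hs
      exact le_of_lt (lt_of_le_of_lt (hmS.2 s hs) (hB1 s (Set.Icc_subset_Icc hmT₀ le_rfl hs)))
    -- find t' < m that's still in S
    have hcontm : ContinuousWithinAt (fun s => |G s| - B s) (Set.Icc T₀ T₁) m :=
      ((hGcont.abs).sub hBcont.continuousOn) m ⟨hmT₀, hmT₁⟩
    have hev : ∀ᶠ s in nhdsWithin m (Set.Icc T₀ T₁), |G s| - B s < 0 := by
      apply hcontm.eventually_lt_const
      show |G m| - B m < 0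
      linarith
    rw [Filter.eventually_iff, Metric.mem_nhdsWithin_iff] at hev
    obtain ⟨ε, hεpos, hε⟩ := hev
    set t' : ℝ := max T₀ (m - ε / 2) with ht'def
    have ht'm : t' < m := by
      apply max_lt hT₀m
      linarith
    have ht'T₀ : T₀ ≤ t' := le_max_left _ _
    have ht'S : t' ∈ S := by
      refine ⟨⟨ht'T₀, le_trans ht'm.le hmT₁⟩, ?_⟩
      intro s hs
      rcases le_or_gt m s with h | h
      · exact hmS.2 s ⟨h, hs.2⟩
      · have hsIcc : s ∈ Set.Icc T₀ T₁ := ⟨le_trans ht'T₀ hs.1, hs.2⟩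
        have hdist : dist s m < ε := by
          rw [Real.dist_eq, abs_of_nonpos (by linarith)]
          have : m - ε / 2 ≤ t' := le_max_right _ _
          have := hs.1
          linarith
        have hmem := hε ⟨Metric.mem_ball.mpr hdist, hsIcc⟩
        simp only [Set.mem_setOf_eq] at hmem
        linarith
    exact absurd (csInf_le hSbdd ht'S) (not_le.mpr ht'm)
  intro t ht
  have : t ∈ Set.Icc m T₁ := by rw [hmeq]; exact ht
  exact hmS.2 t this
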